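/- arXiv:2409.06142 — 3 statements merged into one kernel-verified Lean document; each statement's English description precedes it below -/
import Mathlib

section
/- Bound on the KL divergence between two posterior distributions with common prior: for probability mass functions over finite X of the form p_i(x) = ℓ_i(x) p(x) / Z_i with Z_i = Σ_x ℓ_i(x) p(x), where 0 < ℓ_i(x) ≤ 1, it holds that D_KL(p₁‖p₂) ≤ E_{p₁}[(ℓ₁(x) − ℓ₂(x))/ℓ₂(x)] + E_p[ℓ₂(x) − ℓ₁(x)]/E_p[ℓ₁(x)]. -/
/-- KL divergence bound between two posteriors sharing a common prior. -/
theorem kl_posterior_bound {X : Type*} [Fintype X] [Nonempty X]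
    (p ℓ₁ ℓ₂ : X → ℝ) (hp : ∀ x, 0 < p x) (hpsum : ∑ x, p x = 1)
    (hℓ₁ : ∀ x, 0 < ℓ₁ x ∧ ℓ₁ x ≤ 1) (hℓ₂ : ∀ x, 0 < ℓ₂ x ∧ ℓ₂ x ≤ 1)
    (Z₁ Z₂ : ℝ) (hZ₁ : Z₁ = ∑ x, ℓ₁ x * p x) (hZ₂ : Z₂ = ∑ x, ℓ₂ x * p x)
    (p₁ p₂ : X → ℝ) (hp₁ : ∀ x, p₁ x = ℓ₁ x * p x / Z₁) (hp₂ : ∀ x, p₂ x = ℓ₂ x * p x / Z₂) :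
    ∑ x, p₁ x * Real.log (p₁ x / p₂ x) ≤
      (∑ x, p₁ x * ((ℓ₁ x - ℓ₂ x) / ℓ₂ x)) +
        (∑ x, p x * (ℓ₂ x - ℓ₁ x)) / (∑ x, p x * ℓ₁ x) := by
  have hZ₁pos : 0 < Z₁ := by
    rw [hZ₁]; exact Finset.sum_pos (fun x _ => mul_pos (hℓ₁ x).1 (hp x)) Finset.univ_nonempty
  have hZ₂pos : 0 < Z₂ := by
    rw [hZ₂]; exact Finset.sum_pos (fun x _ => mul_pos (hℓ₂ x).1 (hp x)) Finset.univ_nonempty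
  have hp₁pos : ∀ x, 0 < p₁ x := fun x => by
    rw [hp₁ x]; exact div_pos (mul_pos (hℓ₁ x).1 (hp x)) hZ₁pos
  have hp₁sum : ∑ x, p₁ x = 1 := by
    simp only [hp₁, div_eq_mul_inv, ← Finset.sum_mul, ← hZ₁]
    field_simp
  -- termwise decomposition of the log
  have hdecomp : ∀ x, Real.log (p₁ x / p₂ x)
      = Real.log (ℓ₁ x / ℓ₂ x) + Real.log (Z₂ / Z₁) := by
    intro x
    have h1 : p₁ x / p₂ x = (ℓ₁ x / ℓ₂ x) * (Z₂ / Z₁) := by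
      rw [hp₁ x, hp₂ x]
      field_simp [(hp x).ne', (hℓ₂ x).1.ne', hZ₁pos.ne', hZ₂pos.ne']
    rw [h1, Real.log_mul (div_pos (hℓ₁ x).1 (hℓ₂ x).1).ne' (div_pos hZ₂pos hZ₁pos).ne']
  calc ∑ x, p₁ x * Real.log (p₁ x / p₂ x)
      = (∑ x, p₁ x * Real.log (ℓ₁ x / ℓ₂ x)) + Real.log (Z₂ / Z₁) := by
        simp only [hdecomp, mul_add, Finset.sum_add_distrib, ← Finset.sum_mul, hp₁sum, one_mul]
    _ ≤ (∑ x, p₁ x * ((ℓ₁ x - ℓ₂ x) / ℓ₂ x)) +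
        (∑ x, p x * (ℓ₂ x - ℓ₁ x)) / (∑ x, p x * ℓ₁ x) := by
        apply add_le_add
        · apply Finset.sum_le_sum
          intro x _
          apply mul_le_mul_of_nonneg_left _ (hp₁pos x).le
          have := Real.log_le_sub_one_of_pos (div_pos (hℓ₁ x).1 (hℓ₂ x).1)
          calc Real.log (ℓ₁ x / ℓ₂ x) ≤ ℓ₁ x / ℓ₂ x - 1 := this
            _ = (ℓ₁ x - ℓ₂ x) / ℓ₂ x := by
                rw [sub_div, div_self (hℓ₂ x).1.ne']
        · have hs₁ : ∑ x, p x * ℓ₁ x = Z₁ := by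
            rw [hZ₁]; exact Finset.sum_congr rfl fun x _ => mul_comm _ _
          have hs₂ : ∑ x, p x * (ℓ₂ x - ℓ₁ x) = Z₂ - Z₁ := by
            rw [hZ₁, hZ₂, ← Finset.sum_sub_distrib]
            exact Finset.sum_congr rfl fun x _ => by ring
          rw [hs₁, hs₂]
          calc Real.log (Z₂ / Z₁) ≤ Z₂ / Z₁ - 1 :=
                Real.log_le_sub_one_of_pos (div_pos hZ₂pos hZ₁pos)
            _ = (Z₂ - Z₁) / Z₁ := by rw [sub_div, div_self hZ₁pos.ne']
end

section
/- Probability-of-improvement approximation error bound: for μ, f, τ ∈ ℝ, σ ≥ 0 and σ_ε > 0, |Φ((μ − τ)/√(σ² + σ²_ε)) − Φ((f − τ)/σ_ε)| ≤ (σ_ε |μ − f| + σ (|f| + |τ|)) / (σ²_ε √(2π)). -/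
/-- The standard normal cumulative distribution function. -/
noncomputable def stdNormalCDF (t : ℝ) : ℝ :=
  ∫ s in Set.Iic t, (Real.sqrt (2 * Real.pi))⁻¹ * Real.exp (-(s ^ 2) / 2)

lemma stdNormal_density_integrable :
    MeasureTheory.Integrable (fun s : ℝ => (Real.sqrt (2 * Real.pi))⁻¹ * Real.exp (-(s ^ 2) / 2)) := by
  have h : MeasureTheory.Integrable (fun s : ℝ => Real.exp (-(1/2 : ℝ) * s ^ 2)) :=
    integrable_exp_neg_mul_sq (by norm_num)
  have : (fun s : ℝ => (Real.sqrt (2 * Real.pi))⁻¹ * Real.exp (-(s ^ 2) / 2))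
      = fun s => (Real.sqrt (2 * Real.pi))⁻¹ * Real.exp (-(1/2 : ℝ) * s ^ 2) := by
    funext s; ring_nf
  rw [this]
  exact h.const_mul _

lemma stdNormalCDF_lipschitz (a b : ℝ) :
    |stdNormalCDF a - stdNormalCDF b| ≤ |a - b| / Real.sqrt (2 * Real.pi) := by
  have hint := stdNormal_density_integrable
  have key : stdNormalCDF a - stdNormalCDF b
      = ∫ s in b..a, (Real.sqrt (2 * Real.pi))⁻¹ * Real.exp (-(s ^ 2) / 2) :=
    (intervalIntegral.integral_Iic_sub_Iic hint.integrableOn hint.integrableOn)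
  rw [key]
  have hbd : ∀ x ∈ Set.uIoc b a,
      ‖(Real.sqrt (2 * Real.pi))⁻¹ * Real.exp (-(x ^ 2) / 2)‖ ≤ (Real.sqrt (2 * Real.pi))⁻¹ := by
    intro x _
    rw [Real.norm_eq_abs, abs_mul, abs_of_nonneg (inv_nonneg.mpr (Real.sqrt_nonneg _)),
      abs_of_nonneg (Real.exp_pos _).le]
    have : Real.exp (-(x ^ 2) / 2) ≤ 1 := by
      rw [Real.exp_le_one_iff]; nlinarith [sq_nonneg x]
    nlinarith [inv_nonneg.mpr (Real.sqrt_nonneg (2 * Real.pi))]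
  calc |∫ s in b..a, (Real.sqrt (2 * Real.pi))⁻¹ * Real.exp (-(s ^ 2) / 2)|
      ≤ (Real.sqrt (2 * Real.pi))⁻¹ * |a - b| :=
        intervalIntegral.norm_integral_le_of_norm_le_const hbd
    _ = |a - b| / Real.sqrt (2 * Real.pi) := by rw [div_eq_mul_inv, mul_comm]

/-- Probability-of-improvement approximation error bound. -/
theorem pi_approx_error (μ f τ σ σε : ℝ) (hσ : 0 ≤ σ) (hσε : 0 < σε) :
    |stdNormalCDF ((μ - τ) / Real.sqrt (σ ^ 2 + σε ^ 2)) - stdNormalCDF ((f - τ) / σε)| ≤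
      (σε * |μ - f| + σ * (|f| + |τ|)) / (σε ^ 2 * Real.sqrt (2 * Real.pi)) := by
  set s := Real.sqrt (σ ^ 2 + σε ^ 2) with hs
  have hs_pos : 0 < s := Real.sqrt_pos.mpr (by positivity)
  have hs_ge : σε ≤ s := by
    rw [hs]
    have : σε = Real.sqrt (σε ^ 2) := by rw [Real.sqrt_sq hσε.le]
    rw [this]
    exact Real.sqrt_le_sqrt (by nlinarith [Real.sq_sqrt (show (0:ℝ) ≤ σε^2 by positivity)])
  have hs_le : s ≤ σ + σε := by
    rw [hs]
    have : σ + σε = Real.sqrt ((σ + σε) ^ 2) := (Real.sqrt_sq (by positivity)).symm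
    rw [this]
    exact Real.sqrt_le_sqrt (by nlinarith)
  have hπ : 0 < Real.sqrt (2 * Real.pi) := Real.sqrt_pos.mpr (by positivity)
  have h1 := stdNormalCDF_lipschitz ((μ - τ) / s) ((f - τ) / σε)
  refine h1.trans ?_
  have hdiff : (μ - τ) / s - (f - τ) / σε = (σε * (μ - f) + (σε - s) * (f - τ)) / (s * σε) := by
    field_simp
    ring
  rw [hdiff, abs_div, abs_of_pos (mul_pos hs_pos hσε)]
  have habs : |σε - s| ≤ σ := by
    rw [abs_sub_comm, abs_of_nonneg (sub_nonneg.mpr hs_ge)]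
    linarith
  have hnum : |σε * (μ - f) + (σε - s) * (f - τ)| ≤ σε * |μ - f| + σ * (|f| + |τ|) := by
    calc |σε * (μ - f) + (σε - s) * (f - τ)|
        ≤ |σε * (μ - f)| + |(σε - s) * (f - τ)| := abs_add_le _ _
      _ = σε * |μ - f| + |σε - s| * |f - τ| := by
          rw [abs_mul, abs_mul, abs_of_pos hσε]
      _ ≤ σε * |μ - f| + σ * (|f| + |τ|) := by
          gcongr
          exact abs_sub _ _
  have hden : σε ^ 2 ≤ s * σε := by nlinarith
  have hnum_nonneg : (0:ℝ) ≤ σε * |μ - f| + σ * (|f| + |τ|) := by positivity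
  calc |σε * (μ - f) + (σε - s) * (f - τ)| / (s * σε) / Real.sqrt (2 * Real.pi)
      ≤ (σε * |μ - f| + σ * (|f| + |τ|)) / (σε ^ 2) / Real.sqrt (2 * Real.pi) := by
        gcongr ?_ / _
        calc |σε * (μ - f) + (σε - s) * (f - τ)| / (s * σε)
            ≤ (σε * |μ - f| + σ * (|f| + |τ|)) / (s * σε) := by gcongr
          _ ≤ (σε * |μ - f| + σ * (|f| + |τ|)) / (σε ^ 2) := by
              apply div_le_div_of_nonneg_left hnum_nonneg (by positivity) hden
    _ = (σε * |μ - f| + σ * (|f| + |τ|)) / (σε ^ 2 * Real.sqrt (2 * Real.pi)) := by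
        rw [div_div]
end

section
/- For a symmetric positive-definite matrix K and scalars ν, s > 0, the implicit regularization matrix Σ := K(e^{νsK} − I)⁻¹ satisfies Σ ⪰ (e^{-νs λ_max(K)}/(νs)) I, where λ_max(K) is the largest eigenvalue of K; in particular, if ν λ_max(K) ≤ 1 then Σ ⪰ (e^{-s}/(νs)) I. -/
open Matrix

lemma aux_scalar (t lam l : ℝ) (ht : 0 < t) (hl : 0 < l) (hle : l ≤ lam) :
    Real.exp (-(t * lam)) / t ≤ l / (Real.exp (t * l) - 1) := by
  have ha : 0 < t * l := mul_pos ht hl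
  have hd : 0 < Real.exp (t * l) - 1 := by
    have := Real.one_lt_exp_iff.mpr ha; linarith
  have key : Real.exp (-(t * l)) / t ≤ l / (Real.exp (t * l) - 1) := by
    rw [div_le_div_iff₀ ht hd]
    have h1 : Real.exp (-(t * l)) * (Real.exp (t * l) - 1) = 1 - Real.exp (-(t * l)) := by
      rw [Real.exp_neg]
      field_simp
    have h2 : 1 - Real.exp (-(t * l)) ≤ t * l := by
      have := Real.add_one_le_exp (-(t * l)); linarith
    rw [h1]; linarith
  refine le_trans ?_ key
  gcongr

/-- Lower bound on the implicit regularization matrix Σ = K(e^{νsK} − I)⁻¹: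
Σ ⪰ (e^{-νs·λmax}/(νs)) I, and if ν·λmax ≤ 1 then Σ ⪰ (e^{-s}/(νs)) I.
Here `lam` is an upper bound on the Rayleigh quotient of K (i.e. the largest eigenvalue). -/
theorem implicit_reg_lower (n : ℕ) (K : Matrix (Fin n) (Fin n) ℝ) (hK : K.PosDef)
    (ν s lam : ℝ) (hν : 0 < ν) (hs : 0 < s)
    (hlam : ∀ x : Fin n → ℝ, x ⬝ᵥ (K *ᵥ x) ≤ lam * (x ⬝ᵥ x)) :
    ((K * (NormedSpace.exp ((ν * s) • K) - 1)⁻¹)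
        - (Real.exp (-(ν * s * lam)) / (ν * s)) • (1 : Matrix (Fin n) (Fin n) ℝ)).PosSemidef ∧
    (ν * lam ≤ 1 →
      ((K * (NormedSpace.exp ((ν * s) • K) - 1)⁻¹)
        - (Real.exp (-s) / (ν * s)) • (1 : Matrix (Fin n) (Fin n) ℝ)).PosSemidef) := by
  set t : ℝ := ν * s with htdef
  have ht : 0 < t := mul_pos hν hs
  have hH : K.IsHermitian := hK.1
  set U : Matrix (Fin n) (Fin n) ℝ := (hH.eigenvectorUnitary : Matrix (Fin n) (Fin n) ℝ) with hUdef
  set μ : Fin n → ℝ := hH.eigenvalues with hμdef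
  have hμpos : ∀ i, 0 < μ i := hK.eigenvalues_pos
  have hU2 : U * Uᴴ = 1 := Matrix.mem_unitaryGroup_iff.mp hH.eigenvectorUnitary.2
  have hU1 : Uᴴ * U = 1 := Matrix.mem_unitaryGroup_iff'.mp hH.eigenvectorUnitary.2
  have hUunit : IsUnit U := ⟨⟨U, Uᴴ, hU2, hU1⟩, rfl⟩
  have hUinv : U⁻¹ = Uᴴ := Matrix.inv_eq_right_inv hU2
  have hspec : K = U * diagonal μ * Uᴴ := by
    have := hH.spectral_theorem
    simpa [Matrix.star_eq_conjTranspose] using this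
  -- eigenvalue upper bound
  have hμle : ∀ i, μ i ≤ lam := by
    intro i
    have hv := hH.eigenvalues_eq i
    set v : Fin n → ℝ := ⇑(hH.eigenvectorBasis i) with hvdef
    have hnorm : v ⬝ᵥ v = 1 := by
      have h1 : (inner (𝕜 := ℝ) (hH.eigenvectorBasis i) (hH.eigenvectorBasis i)) = (1:ℝ) := by
        rw [real_inner_self_eq_norm_sq, hH.eigenvectorBasis.orthonormal.1 i]; norm_num
      rw [EuclideanSpace.inner_eq_star_dotProduct] at h1
      simpa using h1
    have := hlam v
    rw [hnorm, mul_one] at this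
    calc μ i = v ⬝ᵥ (K *ᵥ v) := by simpa using hv
      _ ≤ lam := this
  -- diagonalization of the exponential
  have hdK : t • K = U * diagonal (fun i => t * μ i) * Uᴴ := by
    have hD : diagonal (fun i => t * μ i) = t • diagonal μ := by
      rw [← Matrix.diagonal_smul]; rfl
    rw [hspec, hD]
    simp only [mul_smul_comm, smul_mul_assoc]
  have hexp : NormedSpace.exp (t • K) = U * diagonal (fun i => Real.exp (t * μ i)) * Uᴴ := by
    rw [hdK, ← hUinv, Matrix.exp_conj U _ hUunit, Matrix.exp_diagonal, hUinv]
    congr 2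
    funext i
    simp [Pi.exp_def, Real.exp_eq_exp_ℝ]
  have hsub : NormedSpace.exp (t • K) - 1
      = U * diagonal (fun i => Real.exp (t * μ i) - 1) * Uᴴ := by
    have hD : diagonal (fun i => Real.exp (t * μ i) - 1)
        = diagonal (fun i => Real.exp (t * μ i)) - 1 := by
      rw [← Matrix.diagonal_one, Matrix.diagonal_sub]
    rw [hexp, hD, Matrix.mul_sub, Matrix.sub_mul, mul_one, hU2]
  have hdne : ∀ i, Real.exp (t * μ i) - 1 ≠ 0 := by
    intro i
    have : (1:ℝ) < Real.exp (t * μ i) := Real.one_lt_exp_iff.mpr (mul_pos ht (hμpos i))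
    linarith
  have hinv : (NormedSpace.exp (t • K) - 1)⁻¹
      = U * diagonal (fun i => (Real.exp (t * μ i) - 1)⁻¹) * Uᴴ := by
    apply Matrix.inv_eq_right_inv
    rw [hsub]
    calc U * diagonal (fun i => Real.exp (t * μ i) - 1) * Uᴴ *
          (U * diagonal (fun i => (Real.exp (t * μ i) - 1)⁻¹) * Uᴴ)
        = U * diagonal (fun i => Real.exp (t * μ i) - 1) * (Uᴴ * U) *
            diagonal (fun i => (Real.exp (t * μ i) - 1)⁻¹) * Uᴴ := by
          simp only [Matrix.mul_assoc]
      _ = U * (diagonal (fun i => Real.exp (t * μ i) - 1) *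
            diagonal (fun i => (Real.exp (t * μ i) - 1)⁻¹)) * Uᴴ := by
          rw [hU1, mul_one]; simp only [Matrix.mul_assoc]
      _ = 1 := by
          rw [Matrix.diagonal_mul_diagonal]
          have : (fun i => (Real.exp (t * μ i) - 1) * (Real.exp (t * μ i) - 1)⁻¹)
              = fun _ => (1:ℝ) := by
            funext i; exact mul_inv_cancel₀ (hdne i)
          rw [this, Matrix.diagonal_one, mul_one, hU2]
  have hSig : K * (NormedSpace.exp (t • K) - 1)⁻¹
      = U * diagonal (fun i => μ i * (Real.exp (t * μ i) - 1)⁻¹) * Uᴴ := by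
    rw [hinv]
    nth_rewrite 1 [hspec]
    calc U * diagonal μ * Uᴴ * (U * diagonal (fun i => (Real.exp (t * μ i) - 1)⁻¹) * Uᴴ)
        = U * diagonal μ * (Uᴴ * U) * diagonal (fun i => (Real.exp (t * μ i) - 1)⁻¹) * Uᴴ := by
          simp only [Matrix.mul_assoc]
      _ = U * (diagonal μ * diagonal (fun i => (Real.exp (t * μ i) - 1)⁻¹)) * Uᴴ := by
          rw [hU1, mul_one]; simp only [Matrix.mul_assoc]
      _ = U * diagonal (fun i => μ i * (Real.exp (t * μ i) - 1)⁻¹) * Uᴴ := by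
          rw [Matrix.diagonal_mul_diagonal]
  -- generic claim
  have claim : ∀ c : ℝ, c ≤ Real.exp (-(t * lam)) / t →
      ((K * (NormedSpace.exp (t • K) - 1)⁻¹)
        - c • (1 : Matrix (Fin n) (Fin n) ℝ)).PosSemidef := by
    intro c hc
    have hcI : c • (1 : Matrix (Fin n) (Fin n) ℝ)
        = U * (c • (1 : Matrix (Fin n) (Fin n) ℝ)) * Uᴴ := by
      simp only [mul_smul_comm, smul_mul_assoc, mul_one, hU2]
    rw [hSig, hcI, Matrix.smul_one_eq_diagonal, ← Matrix.sub_mul, ← Matrix.mul_sub,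
      Matrix.diagonal_sub]
    have hdiagPSD : (diagonal (fun i => μ i * (Real.exp (t * μ i) - 1)⁻¹ - c)).PosSemidef := by
      rw [Matrix.posSemidef_diagonal_iff]
      intro i
      have hb := aux_scalar t lam (μ i) ht (hμpos i) (hμle i)
      have : c ≤ μ i * (Real.exp (t * μ i) - 1)⁻¹ := by
        rw [← div_eq_mul_inv]
        exact hc.trans hb
      linarith
    simpa [Matrix.star_eq_conjTranspose] using hdiagPSD.mul_mul_conjTranspose_same U
  constructor
  · exact claim _ le_rfl
  · intro hνlam
    apply claim
    rw [div_le_div_iff₀ ht ht]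
    have hexple : Real.exp (-s) ≤ Real.exp (-(t * lam)) := by
      apply Real.exp_le_exp.mpr
      have : t * lam ≤ s := by nlinarith
      linarith
    nlinarith [Real.exp_pos (-s), Real.exp_pos (-(t * lam))]
end
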